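/- Under the boundary-case, variance, and integrability assumptions, almost surely liminf_{n→∞} R_n / log n ≥ 1/2 on the survival event {#𝐓 = ∞}. (This follows from the bound R_n / log n ≥ M_{τ_n} / log τ_n, where τ_n = inf{k ≥ n : M_k = R_n}, combined with the Hu–Shi result liminf_{n→∞} M_n / log n = 1/2 a.s. on survival.) -/

import Mathlib

open MeasureTheory ProbabilityTheory Filter Topology
open scoped ENNReal NNReal

/-!
A branching random walk on `ℝ`, encoded on Ulam–Harris labels (`List ℕ`):
`T ω` is the genealogical tree, `V ω u` the position of individual `u`,
`u.length` its generation. The structure bundles the boundary case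
assumptions, the variance assumption, the integrability assumption, the
non-lattice assumption, and the branching property (conditionally on the
σ-algebra `F n` of the first `n` generations, the processes generated
by the individuals of generation `n`, shifted to their birth positions,
are i.i.d. copies of the whole branching random walk).
-/
structure BRW where
  /-- the underlying sample space -/
  (Ω : Type)
  [m0 : MeasurableSpace Ω]
  (μ : Measure Ω)
  isProb : IsProbabilityMeasure μ
  /-- the genealogical tree, as a random set of Ulam–Harris labels -/
  T : Ω → Set (List ℕ)
  /-- the positions of the individuals -/
  V : Ω → List ℕ → ℝ
  root_mem : ∀ ω, [] ∈ T ω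
  root_pos : ∀ ω, V ω ([]) = 0
  tree_prefix_closed : ∀ ω, ∀ u v : List ℕ, u <+: v → v ∈ T ω → u ∈ T ω
  meas_T : ∀ u : List ℕ, MeasurableSet {ω | u ∈ T ω}
  meas_V : ∀ u : List ℕ, Measurable fun ω => V ω u
  /-- the natural filtration `F n = σ(u, V(u), |u| ≤ n)` -/
  F : MeasureTheory.Filtration ℕ m0
  F_meas_T : ∀ (n : ℕ) (u : List ℕ), u.length ≤ n → MeasurableSet[F n] {ω | u ∈ T ω}
  F_meas_V : ∀ (n : ℕ) (u : List ℕ), u.length ≤ n → Measurable[F n] fun ω => V ω u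
  /-- supercriticality: `E[∑_{|u|=1} 1] > 1` -/
  supercritical :
    1 < ∫⁻ ω, (∑' i : ℕ, Set.indicator {ω' | [i] ∈ T ω'} (fun _ => (1 : ℝ≥0∞)) ω) ∂μ
  /-- boundary case: `E[∑_{|u|=1} e^{-V(u)}] = 1` -/
  mean_one :
    ∫⁻ ω, (∑' i : ℕ, Set.indicator {ω' | [i] ∈ T ω'}
      (fun ω' => ENNReal.ofReal (Real.exp (-(V ω' ([i]))))) ω) ∂μ = 1
  int_VexpV : Integrable (fun ω => ∑' i : ℕ, Set.indicator {ω' | [i] ∈ T ω'}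
      (fun ω' => V ω' ([i]) * Real.exp (-(V ω' ([i])))) ω) μ
  /-- boundary case: `E[∑_{|u|=1} V(u) e^{-V(u)}] = 0` -/
  mean_zero :
    ∫ ω, (∑' i : ℕ, Set.indicator {ω' | [i] ∈ T ω'}
      (fun ω' => V ω' ([i]) * Real.exp (-(V ω' ([i])))) ω) ∂μ = 0
  /-- `σ² = E[∑_{|u|=1} V(u)² e^{-V(u)}]`, finite by the equality with `ENNReal.ofReal` -/
  σ2 : ℝ
  variance_eq :
    ENNReal.ofReal σ2 = ∫⁻ ω, (∑' i : ℕ, Set.indicator {ω' | [i] ∈ T ω'}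
      (fun ω' => ENNReal.ofReal ((V ω' ([i])) ^ 2 * Real.exp (-(V ω' ([i]))))) ω) ∂μ
  variance_pos : 0 < σ2
  /-- `E[∑_{|u|=1} e^{-V(u)} (log₊ ∑_{|u|=1} (1+V(u)₊) e^{-V(u)})²] < ∞` -/
  integrability :
    ∫⁻ ω, ENNReal.ofReal
      ((∑' i : ℕ, Set.indicator {ω' | [i] ∈ T ω'}
          (fun ω' => Real.exp (-(V ω' ([i])))) ω) *
        (max (Real.log (∑' i : ℕ, Set.indicator {ω' | [i] ∈ T ω'}
          (fun ω' => (1 + max (V ω' ([i])) 0) * Real.exp (-(V ω' ([i])))) ω)) 0) ^ 2) ∂μ < ⊤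
  /-- the displacement law is non-lattice -/
  nonlattice : ∀ a d : ℝ, 0 < d →
    ¬ (∀ᵐ ω ∂μ, ∀ i : ℕ, [i] ∈ T ω → ∃ k : ℤ, V ω ([i]) = a + k * d)
  /-- branching property: given `F n`, the shifted subtrees rooted at the individuals of
  generation `n` are i.i.d. copies of the whole branching random walk. A subtree rooted at `u`
  is encoded by the pair (membership predicate of the shifted tree, shifted positions). -/
  branching : ∀ (n : ℕ) (us : Finset (List ℕ)), (∀ u ∈ us, u.length = n) →
    ∀ A : Set Ω, MeasurableSet[F n] A → (∀ ω ∈ A, ∀ u ∈ us, u ∈ T ω) →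
    ∀ g : List ℕ → Set ((List ℕ → Prop) × (List ℕ → ℝ)),
      (∀ u ∈ us, MeasurableSet (g u)) →
      μ (A ∩ ⋂ u ∈ us, {ω | ((fun v => u ++ v ∈ T ω), fun v => V ω (u ++ v) - V ω u) ∈ g u})
        = μ A * ∏ u ∈ us, μ {ω | ((fun v => v ∈ T ω), V ω) ∈ g u}

attribute [instance] BRW.m0

namespace BRW

variable (B : BRW)

/-- `M n`, the minimal position at generation `n`. -/
noncomputable def M (n : ℕ) (ω : B.Ω) : ℝ :=
  sInf {x | ∃ u ∈ B.T ω, u.length = n ∧ B.V ω u = x}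

/-- `R n`, the minimal position attained after time `n`. -/
noncomputable def R (n : ℕ) (ω : B.Ω) : ℝ :=
  sInf {x | ∃ u ∈ B.T ω, n ≤ u.length ∧ B.V ω u = x}

/-- the additive martingale `W n = ∑_{|u|=n} e^{-V(u)}`. -/
noncomputable def W (n : ℕ) (ω : B.Ω) : ℝ :=
  ∑' u : List ℕ, Set.indicator {u : List ℕ | u.length = n ∧ u ∈ B.T ω}
    (fun u => Real.exp (-(B.V ω u))) u

/-- the derivative martingale `Z n = ∑_{|u|=n} V(u) e^{-V(u)}`. -/
noncomputable def Z (n : ℕ) (ω : B.Ω) : ℝ :=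
  ∑' u : List ℕ, Set.indicator {u : List ℕ | u.length = n ∧ u ∈ B.T ω}
    (fun u => B.V ω u * Real.exp (-(B.V ω u))) u

/-- `Zinf` is the a.s. limit `Z_∞` of the derivative martingale. -/
def IsDerivativeMartingaleLimit (Zinf : B.Ω → ℝ) : Prop :=
  Measurable Zinf ∧ ∀ᵐ ω ∂B.μ, Tendsto (fun n => B.Z n ω) atTop (𝓝 (Zinf ω))

/-- `c_M` is the constant from Madaule's tail estimate `lim_{x→∞} e^x P(R_0 ≤ -x) = c_M`. -/
def IsMadauleConstant (cM : ℝ) : Prop :=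
  0 < cM ∧
    Tendsto (fun x : ℝ => Real.exp x * (B.μ {ω | B.R 0 ω ≤ -x}).toReal) atTop (𝓝 cM)

end BRW

/-- convergence in law (in distribution) of `E`-valued random variables, stated by testing
against bounded continuous functions. -/
def ConvInLaw {Ω Ω' E : Type*} [MeasurableSpace Ω] [MeasurableSpace Ω'] [TopologicalSpace E]
    (μ : Measure Ω) (μ' : Measure Ω') (X : ℕ → Ω → E) (Y : Ω' → E) : Prop :=
  ∀ f : BoundedContinuousFunction E ℝ,
    Tendsto (fun n => ∫ ω, f (X n ω) ∂μ) atTop (𝓝 (∫ ω, f (Y ω) ∂μ'))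

/-- `c_*` is the constant from Aïdékon's theorem: `(Z_n, M_n - (3/2) log n)` converges in law
to a pair `(Z', W')` where `Z'` has the law of `Z_∞` and
`P(W' ≥ x | Z') = exp (-c_* Z' e^x)`. -/
def BRW.IsAidekonConstant (B : BRW) (Zinf : B.Ω → ℝ) (cstar : ℝ) : Prop :=
  ∃ (Ω' : Type) (m' : MeasurableSpace Ω') (μ' : @Measure Ω' m') (Z' W' : Ω' → ℝ),
    @IsProbabilityMeasure Ω' m' μ' ∧ @Measurable Ω' ℝ m' _ Z' ∧ @Measurable Ω' ℝ m' _ W' ∧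
    @Measure.map Ω' ℝ m' _ Z' μ' = Measure.map Zinf B.μ ∧
    (∀ x : ℝ,
      (@MeasureTheory.condExp Ω' ℝ (MeasurableSpace.comap Z' Real.measurableSpace) m' _ _ μ'
          (Set.indicator {ω' | x ≤ W' ω'} (fun _ => (1 : ℝ))))
        =ᵐ[μ'] fun ω' => Real.exp (-(cstar * Z' ω' * Real.exp x))) ∧
    @ConvInLaw B.Ω Ω' (ℝ × ℝ) _ m' _ B.μ μ'
      (fun n ω => (B.Z n ω, B.M n ω - (3 / 2) * Real.log n)) (fun ω' => (Z' ω', W' ω'))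

/-- a random vector `(Z', W', L')` on some probability space, used to describe limits in law. -/
structure RandomTriple where
  (Ω' : Type)
  [m' : MeasurableSpace Ω']
  (μ' : Measure Ω')
  isProb : IsProbabilityMeasure μ'
  (Z' : Ω' → ℝ)
  (W' : Ω' → ℝ)
  (L' : Ω' → ℝ)
  meas_Z : Measurable Z'
  meas_W : Measurable W'
  meas_L : Measurable L'

attribute [instance] RandomTriple.m'

/-- a real random variable on some probability space, used to describe limits in law. -/
structure RandomVar where
  (Ω' : Type)
  [m' : MeasurableSpace Ω']
  (μ' : Measure Ω')
  isProb : IsProbabilityMeasure μ'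
  (X' : Ω' → ℝ)
  meas_X : Measurable X'

attribute [instance] RandomVar.m'

/-- almost surely on the survival event, `liminf R_n / log n ≥ 1/2`; it follows from the
bound `R_n / log n ≥ M_{τ_n} / log τ_n` and the Hu–Shi result
`liminf M_n / log n = 1/2` a.s. on survival. -/
theorem liminf_Rn_over_log (B : BRW)
    (hHuShi : ∀ᵐ ω ∂B.μ, (B.T ω).Infinite →
      liminf (fun n : ℕ => B.M n ω / Real.log n) atTop = 1 / 2) :
    ∀ᵐ ω ∂B.μ, (B.T ω).Infinite →
      (1 / 2 : ℝ) ≤ liminf (fun n : ℕ => B.R n ω / Real.log n) atTop := by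

  filter_upwards [hHuShi] with ω hω hinf
  have h := hω hinf
  set f : ℕ → ℝ := fun n => B.M n ω / Real.log n with hf
  set g : ℕ → ℝ := fun n => B.R n ω / Real.log n with hg
  -- the set of eventual lower bounds of f
  set L : Set ℝ := {a | ∀ᶠ n in atTop, a ≤ f n} with hL
  have hsup : sSup L = 1 / 2 := by rw [← h, Filter.liminf_eq]
  have hLbdd : BddAbove L := by
    by_contra hb
    rw [Real.sSup_of_not_bddAbove hb] at hsup
    norm_num at hsup
  have hLne : L.Nonempty := by
    rcases Set.eq_empty_or_nonempty L with he | hne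
    · rw [he, Real.sSup_empty] at hsup; norm_num at hsup
    · exact hne
  -- key eventual bounds
  have key : ∀ a' : ℝ, 0 < a' → a' < 1 / 2 →
      ∀ᶠ n in atTop, a' ≤ g n ∧ g n ≤ f n := by
    intro a' ha'0 ha'
    obtain ⟨b, hbL, hab⟩ := exists_lt_of_lt_csSup hLne (by rw [hsup]; exact ha')
    obtain ⟨N, hN⟩ := Filter.eventually_atTop.mp hbL
    -- generation-level facts, for k ≥ max N 2
    have genfact : ∀ k : ℕ, max N 2 ≤ k →
        (∀ x ∈ {x | ∃ u ∈ B.T ω, u.length = k ∧ B.V ω u = x}, a' * Real.log k ≤ x) ∧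
        {x | ∃ u ∈ B.T ω, u.length = k ∧ B.V ω u = x}.Nonempty ∧
        0 < Real.log k := by
      intro k hk
      have hk2 : (2 : ℕ) ≤ k := le_trans (le_max_right _ _) hk
      have hlogk : 0 < Real.log k := by
        apply Real.log_pos
        exact_mod_cast Nat.lt_of_lt_of_le one_lt_two hk2
      have hMk : a' * Real.log k ≤ B.M k ω := by
        have h1 : b ≤ B.M k ω / Real.log k := hN k (le_trans (le_max_left _ _) hk)
        have h2 : b * Real.log k ≤ B.M k ω := by
          rw [← le_div_iff₀ hlogk]; exact h1
        calc a' * Real.log k ≤ b * Real.log k := by nlinarith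
          _ ≤ B.M k ω := h2
      have hMkpos : 0 < B.M k ω := lt_of_lt_of_le (by positivity) hMk
      have hAk : B.M k ω = sInf {x | ∃ u ∈ B.T ω, u.length = k ∧ B.V ω u = x} := rfl
      have hne : {x | ∃ u ∈ B.T ω, u.length = k ∧ B.V ω u = x}.Nonempty := by
        rcases Set.eq_empty_or_nonempty {x | ∃ u ∈ B.T ω, u.length = k ∧ B.V ω u = x}
          with he | hne
        · rw [hAk, he, Real.sInf_empty] at hMkpos; norm_num at hMkpos
        · exact hne
      have hbdd : BddBelow {x | ∃ u ∈ B.T ω, u.length = k ∧ B.V ω u = x} := by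
        by_contra hb'
        rw [hAk, Real.sInf_of_not_bddBelow hb'] at hMkpos; norm_num at hMkpos
      refine ⟨fun x hx => le_trans hMk ?_, hne, hlogk⟩
      rw [hAk]
      exact csInf_le hbdd hx
    rw [Filter.eventually_atTop]
    refine ⟨max N 2, fun n hn => ?_⟩
    obtain ⟨hbound_n, hne_n, hlogn⟩ := genfact n hn
    -- every position after generation n is at least a' * log n
    have hSbound : ∀ x ∈ {x | ∃ u ∈ B.T ω, n ≤ u.length ∧ B.V ω u = x},
        a' * Real.log n ≤ x := by
      rintro x ⟨u, hu, hlen, hVx⟩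
      have hk : max N 2 ≤ u.length := le_trans hn hlen
      obtain ⟨hbk, _, hlogk⟩ := genfact u.length hk
      have hx : x ∈ {x | ∃ v ∈ B.T ω, v.length = u.length ∧ B.V ω v = x} :=
        ⟨u, hu, rfl, hVx⟩
      have h1 : a' * Real.log u.length ≤ x := hbk x hx
      have h2 : Real.log n ≤ Real.log u.length := by
        have hn0 : (0 : ℝ) < n := by
          have : (2:ℕ) ≤ n := le_trans (le_max_right _ _) hn
          exact_mod_cast Nat.lt_of_lt_of_le Nat.zero_lt_two this
        exact Real.log_le_log hn0 (by exact_mod_cast hlen)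
      nlinarith
    have hSne : {x | ∃ u ∈ B.T ω, n ≤ u.length ∧ B.V ω u = x}.Nonempty := by
      obtain ⟨x, u, hu, hlen, hVx⟩ := hne_n
      exact ⟨x, u, hu, hlen ▸ le_refl n, hVx⟩
    have hSbdd : BddBelow {x | ∃ u ∈ B.T ω, n ≤ u.length ∧ B.V ω u = x} :=
      ⟨a' * Real.log n, fun x hx => hSbound x hx⟩
    have hRn : B.R n ω = sInf {x | ∃ u ∈ B.T ω, n ≤ u.length ∧ B.V ω u = x} := rfl
    have hRlb : a' * Real.log n ≤ B.R n ω := by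
      rw [hRn]; exact le_csInf hSne hSbound
    constructor
    · show a' ≤ B.R n ω / Real.log n
      rw [le_div_iff₀ hlogn]; exact hRlb
    · show B.R n ω / Real.log n ≤ B.M n ω / Real.log n
      have hRM : B.R n ω ≤ B.M n ω := by
        rw [hRn]
        apply le_trans (csInf_le_csInf hSbdd hne_n ?_)
        · exact le_of_eq rfl
        · rintro x ⟨u, hu, hlen, hVx⟩
          exact ⟨u, hu, hlen ▸ le_refl n, hVx⟩
      exact (div_le_div_iff_of_pos_right hlogn).mpr hRM
  -- f is frequently < 1
  have hfreq : ∃ᶠ n in atTop, f n < 1 := by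
    by_contra hc
    rw [Filter.not_frequently] at hc
    have h1 : (1 : ℝ) ∈ L := by
      filter_upwards [hc] with n hn
      exact not_lt.mp hn
    have := le_csSup hLbdd h1
    rw [hsup] at this; norm_num at this
  -- liminf g ≥ 1/2
  rw [Filter.liminf_eq]
  have hL'bdd : BddAbove {a | ∀ᶠ n in atTop, a ≤ g n} := by
    refine ⟨1, fun b hb => ?_⟩
    have hcomb : ∃ᶠ n in atTop, f n < 1 ∧ b ≤ g n ∧ (g n ≤ f n) := by
      apply hfreq.and_eventually
      filter_upwards [hb, key (1/4) (by norm_num) (by norm_num)] with n h1 h2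
      exact ⟨h1, h2.2⟩
    obtain ⟨n, hn1, hn2, hn3⟩ := hcomb.exists
    linarith
  apply le_of_forall_lt
  intro c hc
  set a' : ℝ := (max c 0 + 1 / 2) / 2 with ha'
  have hmax : max c 0 < 1 / 2 := max_lt hc (by norm_num)
  have ha'0 : 0 < a' := by
    have : (0:ℝ) ≤ max c 0 := le_max_right _ _
    rw [ha']; linarith
  have ha'lt : a' < 1 / 2 := by rw [ha']; linarith
  have hca' : c < a' := by
    have : c ≤ max c 0 := le_max_left _ _
    rw [ha']; linarith
  have ha'L : a' ∈ {a | ∀ᶠ n in atTop, a ≤ g n} := by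
    filter_upwards [key a' ha'0 ha'lt] with n hn using hn.1
  calc c < a' := hca'
    _ ≤ sSup {a | ∀ᶠ n in atTop, a ≤ g n} := le_csSup hL'bdd ha'L
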